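/- Let J : c₀(ℤ₊) → L²[0,1] be the bounded linear operator defined by (Jx)(t) = Σ_{n=0}^{∞} x_n (1−t)ⁿ / 2ⁿ, let S be the weighted forward shift on c₀(ℤ₊) with S e_n = e_{n+1}/(n+1) for n ∈ ℤ₀₊ (where {e_n} is the canonical basis of c₀), and let V* be the bounded operator on L²[0,1] given by (V*f)(t) = ∫_t^1 f(s) ds (the adjoint of the Volterra operator). Then 2 J S = V* J. -/

import Mathlib

open MeasureTheory Filter Topology

local notation "μ01" => (MeasureTheory.volume.restrict (Set.Icc (0:ℝ) 1))

/-- Let `J : c₀(ℤ₊) → L²[0,1]` be the bounded operator `(Jx)(t) = ∑ₙ xₙ (1-t)ⁿ / 2ⁿ`, let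
`S` be the weighted forward shift on `c₀(ℤ₊)` with `S eₙ = eₙ₊₁/(n+1)` (equivalently
`(Sx)₀ = 0` and `(Sx)ₙ₊₁ = xₙ/(n+1)`), and let `V*` be the adjoint of the Volterra
operator, `(V*f)(t) = ∫ₜ¹ f(s) ds`. Then `2 J S = V* J`. -/
theorem two_J_S_eq_Vstar_J
    {𝕜 : Type*} [RCLike 𝕜]
    (J : ZeroAtInftyContinuousMap ℕ 𝕜 →L[𝕜] Lp 𝕜 2 μ01)
    (hJ : ∀ x : ZeroAtInftyContinuousMap ℕ 𝕜,
      J x =ᵐ[μ01] fun t => ∑' n : ℕ, (((1 - t) ^ n / 2 ^ n : ℝ) : 𝕜) * x n)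
    (S : ZeroAtInftyContinuousMap ℕ 𝕜 →L[𝕜] ZeroAtInftyContinuousMap ℕ 𝕜)
    (hS0 : ∀ x : ZeroAtInftyContinuousMap ℕ 𝕜, S x 0 = 0)
    (hS : ∀ (x : ZeroAtInftyContinuousMap ℕ 𝕜) (n : ℕ),
      S x (n + 1) = x n / ((n : 𝕜) + 1))
    (Vstar : Lp 𝕜 2 μ01 →L[𝕜] Lp 𝕜 2 μ01)
    (hVstar : ∀ f : Lp 𝕜 2 μ01,
      Vstar f =ᵐ[μ01] fun t => ∫ s in Set.Ioc t (1:ℝ), f s ∂μ01) :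
    ∀ x : ZeroAtInftyContinuousMap ℕ 𝕜, (2 : 𝕜) • J (S x) = Vstar (J x) := by
  intro x
  -- summability of the defining series for any c₀ sequence, any t ∈ [0,1]
  have key : ∀ (y : ZeroAtInftyContinuousMap ℕ 𝕜) (t : ℝ), t ∈ Set.Icc (0:ℝ) 1 →
      Summable fun n : ℕ => (((1 - t) ^ n / 2 ^ n : ℝ) : 𝕜) * y n := by
    intro y t ht
    apply Summable.of_norm_bounded (g := fun n => ‖y‖ * (1/2) ^ n)
      ((summable_geometric_of_lt_one (by norm_num) (by norm_num)).mul_left _)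
    intro n
    rw [norm_mul, RCLike.norm_ofReal]
    have h1t : |1 - t| ≤ 1 := by
      rw [abs_le]; constructor <;> [linarith [ht.2]; linarith [ht.1]]
    have h1 : |(1 - t) ^ n / 2 ^ n| ≤ (1/2) ^ n := by
      rw [abs_div, abs_pow, abs_pow, div_pow, one_pow, abs_two]
      gcongr
      exact pow_le_one₀ (abs_nonneg _) h1t
    have h2 : ‖y n‖ ≤ ‖y‖ := by
      rw [← ZeroAtInftyContinuousMap.norm_toBCF_eq_norm]
      exact BoundedContinuousFunction.norm_coe_le_norm y.toBCF n
    calc |(1 - t) ^ n / 2 ^ n| * ‖y n‖ ≤ (1/2)^n * ‖y‖ :=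
          mul_le_mul h1 h2 (norm_nonneg _) (by positivity)
      _ = ‖y‖ * (1/2)^n := mul_comm _ _
  apply Lp.ext
  filter_upwards [Lp.coeFn_smul (2:𝕜) (J (S x)), hJ (S x), hVstar (J x),
    ae_restrict_mem measurableSet_Icc] with t h1 h2 h3 ht
  rw [h1, Pi.smul_apply, h2, h3]
  have ht0 : (0:ℝ) ≤ t := ht.1
  have ht1 : t ≤ 1 := ht.2
  -- compute the right-hand side
  have hsub : Set.Ioc t 1 ⊆ Set.Icc (0:ℝ) 1 := fun s hs => ⟨ht0.trans hs.1.le, hs.2⟩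
  have hR : (∫ s in Set.Ioc t (1:ℝ), (J x) s ∂μ01)
      = ∑' n : ℕ, (((1 - t) ^ (n+1) / ((n:ℝ)+1) / 2 ^ n : ℝ)) • (x n : 𝕜) := by
    rw [setIntegral_congr_ae measurableSet_Ioc ((hJ x).mono fun s hs _ => hs)]
    rw [Measure.restrict_restrict measurableSet_Ioc, Set.inter_eq_left.mpr hsub]
    have hint : ∀ n : ℕ, IntegrableOn
        (fun s : ℝ => (((1 - s) ^ n / 2 ^ n : ℝ) : 𝕜) * x n) (Set.Ioc t 1) volume := by
      intro n
      apply Continuous.integrableOn_Ioc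
      fun_prop
    rw [← integral_tsum_of_summable_integral_norm hint ?_]
    · refine tsum_congr fun n => ?_
      have : ∀ s : ℝ, (((1 - s) ^ n / 2 ^ n : ℝ) : 𝕜) * x n
          = ((1 - s) ^ n / 2 ^ n : ℝ) • (x n : 𝕜) := fun s =>
        (RCLike.real_smul_eq_coe_mul _ _).symm
      simp_rw [this]
      rw [integral_smul_const, ← intervalIntegral.integral_of_le ht1,
        intervalIntegral.integral_div]
      have : (∫ s in t..(1:ℝ), (1 - s) ^ n) = (1 - t) ^ (n + 1) / ((n:ℝ) + 1) := by
        rw [intervalIntegral.integral_comp_sub_left (fun u => u ^ n) 1]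
        rw [integral_pow]
        ring
      rw [this]
    · apply Summable.of_nonneg_of_le (fun n => integral_nonneg fun s => norm_nonneg _)
        (fun n => ?_) ((summable_geometric_of_lt_one (r := (1:ℝ)/2)
          (by norm_num) (by norm_num)).mul_left ‖x‖)
      haveI : IsFiniteMeasure (volume.restrict (Set.Ioc t 1)) :=
        ⟨by rw [Measure.restrict_apply_univ, Real.volume_Ioc]; exact ENNReal.ofReal_lt_top⟩
      calc (∫ s in Set.Ioc t 1, ‖(((1 - s) ^ n / 2 ^ n : ℝ) : 𝕜) * x n‖ ∂volume)
          = ‖∫ s in Set.Ioc t 1, ‖(((1 - s) ^ n / 2 ^ n : ℝ) : 𝕜) * x n‖ ∂volume‖ := by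
            rw [Real.norm_of_nonneg (integral_nonneg fun s => norm_nonneg _)]
        _ ≤ ‖x‖ * (1/2)^n * ((volume.restrict (Set.Ioc t 1)) Set.univ).toReal := by
            apply norm_integral_le_of_norm_le_const
            filter_upwards [ae_restrict_mem measurableSet_Ioc] with s hs
            rw [Real.norm_of_nonneg (norm_nonneg _), norm_mul, RCLike.norm_ofReal]
            have hs01 : s ∈ Set.Icc (0:ℝ) 1 := hsub hs
            have h1s : |1 - s| ≤ 1 := by
              rw [abs_le]; constructor <;> [linarith [hs01.2]; linarith [hs01.1]]
            have hc : |(1 - s) ^ n / 2 ^ n| ≤ (1/2) ^ n := by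
              rw [abs_div, abs_pow, abs_pow, div_pow, one_pow, abs_two]
              gcongr
              exact pow_le_one₀ (abs_nonneg _) h1s
            have h2 : ‖x n‖ ≤ ‖x‖ := by
              rw [← ZeroAtInftyContinuousMap.norm_toBCF_eq_norm]
              exact BoundedContinuousFunction.norm_coe_le_norm x.toBCF n
            calc |(1 - s) ^ n / 2 ^ n| * ‖x n‖ ≤ (1/2)^n * ‖x‖ :=
                  mul_le_mul hc h2 (norm_nonneg _) (by positivity)
              _ = ‖x‖ * (1/2)^n := mul_comm _ _
        _ ≤ ‖x‖ * (1/2)^n * 1 := by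
            apply mul_le_mul_of_nonneg_left _ (by positivity)
            rw [Measure.restrict_apply_univ, Real.volume_Ioc]
            rw [ENNReal.toReal_ofReal (by linarith : (0:ℝ) ≤ 1 - t)]
            linarith
        _ = ‖x‖ * (1/2)^n := mul_one _
  rw [hR]
  -- compute the left-hand side
  have hL : (∑' n : ℕ, (((1 - t) ^ n / 2 ^ n : ℝ) : 𝕜) * (S x) n)
      = ∑' n : ℕ, (((1 - t) ^ (n+1) / 2 ^ (n+1) : ℝ) : 𝕜) * (x n / ((n:𝕜)+1)) := by
    rw [Summable.tsum_eq_zero_add (key (S x) t ht)]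
    simp only [hS0, hS, mul_zero, zero_add]
  rw [hL, smul_eq_mul, ← tsum_mul_left]
  refine tsum_congr fun n => ?_
  rw [RCLike.real_smul_eq_coe_mul]
  have hn : ((n:𝕜) + 1) ≠ 0 := Nat.cast_add_one_ne_zero n
  push_cast
  field_simp
  ring
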